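/- Let X and Y be real Banach spaces, let F : X → Y be continuously Fréchet differentiable, and let x₀ ∈ X. Assume there are positive constants α, β, δ, ε with β < α and δ ≤ (α − β)·ε such that: (i) ‖F(x₀)‖ ≤ δ; (ii) the derivative F′(x₀) : X → Y is a bijective continuous linear map whose continuous inverse has operator norm at most α⁻¹; (iii) ‖F′(x) − F′(x₀)‖ ≤ β for all x in the closed ball of radius ε around x₀. Then there exists a unique x⋆ in the closed ball of radius ε around x₀ with F(x⋆) = 0. -/

import Mathlib

/-- Quantitative Inverse Function Theorem (Lemma 5.1 in [DH99]): if `F : X → Y` is a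
continuously Fréchet differentiable map between real Banach spaces, `‖F x₀‖ ≤ δ`,
`F′(x₀)` is a continuous linear bijection with continuous inverse of operator norm
at most `α⁻¹`, and `‖F′(x) - F′(x₀)‖ ≤ β` on the closed ball of radius `ε` around `x₀`,
with `β < α` and `δ ≤ (α - β)·ε`, then there is a unique zero of `F` in the closed
ball of radius `ε` around `x₀`. -/
theorem quantitative_inverse_function_theorem
    {X Y : Type*} [NormedAddCommGroup X] [NormedSpace ℝ X] [CompleteSpace X]
    [NormedAddCommGroup Y] [NormedSpace ℝ Y] [CompleteSpace Y]
    (F : X → Y) (F' : X → X →L[ℝ] Y)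
    (hdiff : ∀ x, HasFDerivAt F (F' x) x) (hcont : Continuous F')
    (x₀ : X) (α β δ ε : ℝ)
    (hα : 0 < α) (hβ : 0 < β) (hδ : 0 < δ) (hε : 0 < ε)
    (hβα : β < α) (hδε : δ ≤ (α - β) * ε)
    (hF₀ : ‖F x₀‖ ≤ δ)
    (e : X ≃L[ℝ] Y) (he : (e : X →L[ℝ] Y) = F' x₀)
    (hinv : ‖(e.symm : Y →L[ℝ] X)‖ ≤ α⁻¹)
    (hLip : ∀ x ∈ Metric.closedBall x₀ ε, ‖F' x - F' x₀‖ ≤ β) :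
    ∃! x, x ∈ Metric.closedBall x₀ ε ∧ F x = 0 := by
  classical
  set s := Metric.closedBall x₀ ε with hs
  set T : X → X := fun x => x - e.symm (F x) with hT
  -- key mean-value estimate
  have key : ∀ x ∈ s, ∀ y ∈ s, ‖F y - F x - (F' x₀) (y - x)‖ ≤ β * ‖y - x‖ := by
    intro x hx y hy
    exact Convex.norm_image_sub_le_of_norm_hasFDerivWithin_le'
      (fun z hz => (hdiff z).hasFDerivWithinAt) (fun z hz => hLip z hz)
      (convex_closedBall x₀ ε) hx hy
  have hα' : (0:ℝ) < α⁻¹ := inv_pos.mpr hα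
  -- Lipschitz bound for T on s
  have Tlip : ∀ x ∈ s, ∀ y ∈ s, ‖T y - T x‖ ≤ α⁻¹ * β * ‖y - x‖ := by
    intro x hx y hy
    have h1 : T y - T x = -(e.symm ((F y - F x) - e (y - x))) := by
      simp only [hT]
      rw [map_sub, map_sub]
      have : e.symm (e (y - x)) = y - x := e.symm_apply_apply _
      rw [this]
      abel
    rw [h1, norm_neg]
    calc ‖e.symm ((F y - F x) - e (y - x))‖
        ≤ ‖(e.symm : Y →L[ℝ] X)‖ * ‖(F y - F x) - e (y - x)‖ :=
          (e.symm : Y →L[ℝ] X).le_opNorm _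
      _ ≤ α⁻¹ * (β * ‖y - x‖) := by
          apply mul_le_mul hinv _ (norm_nonneg _) (le_of_lt hα')
          have : (e : X →L[ℝ] Y) (y - x) = (F' x₀) (y - x) := by rw [he]
          calc ‖(F y - F x) - e (y - x)‖ = ‖F y - F x - (F' x₀) (y - x)‖ := by
                rw [show ((e : X ≃L[ℝ] Y) (y - x) : Y) = (F' x₀) (y - x) from this]
            _ ≤ β * ‖y - x‖ := key x hx y hy
      _ = α⁻¹ * β * ‖y - x‖ := by ring
  -- T maps s into s
  have hTx₀ : ‖T x₀ - x₀‖ ≤ α⁻¹ * δ := by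
    have : T x₀ - x₀ = -(e.symm (F x₀)) := by simp [hT]
    rw [this, norm_neg]
    calc ‖e.symm (F x₀)‖ ≤ ‖(e.symm : Y →L[ℝ] X)‖ * ‖F x₀‖ :=
          (e.symm : Y →L[ℝ] X).le_opNorm _
      _ ≤ α⁻¹ * δ := mul_le_mul hinv hF₀ (norm_nonneg _) (le_of_lt hα')
  have hx₀s : x₀ ∈ s := Metric.mem_closedBall_self (le_of_lt hε)
  have Tmaps : ∀ x ∈ s, T x ∈ s := by
    intro x hx
    rw [Metric.mem_closedBall, dist_eq_norm]
    have hxn : ‖x - x₀‖ ≤ ε := by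
      rw [← dist_eq_norm]; exact hx
    calc ‖T x - x₀‖ ≤ ‖T x - T x₀‖ + ‖T x₀ - x₀‖ := by
          have : T x - x₀ = (T x - T x₀) + (T x₀ - x₀) := by abel
          rw [this]; exact norm_add_le _ _
      _ ≤ α⁻¹ * β * ‖x - x₀‖ + α⁻¹ * δ := add_le_add (Tlip x₀ hx₀s x hx) hTx₀
      _ ≤ α⁻¹ * β * ε + α⁻¹ * ((α - β) * ε) := by
          apply add_le_add
          · exact mul_le_mul_of_nonneg_left hxn (by positivity)
          · exact mul_le_mul_of_nonneg_left hδε (le_of_lt hα')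
      _ = ε := by field_simp; ring
  -- set up contraction on the subtype
  haveI : CompleteSpace s := IsClosed.completeSpace_coe (hs := Metric.isClosed_closedBall)
  haveI : Nonempty s := ⟨⟨x₀, hx₀s⟩⟩
  set K : NNReal := ⟨α⁻¹ * β, by positivity⟩ with hK
  have hK1 : K < 1 := by
    rw [← NNReal.coe_lt_coe]
    show α⁻¹ * β < 1
    rw [mul_comm, ← div_eq_mul_inv]
    exact (div_lt_one hα).mpr hβα
  set g : s → s := fun x => ⟨T x, Tmaps x x.2⟩ with hg
  have hgc : ContractingWith K g := by
    constructor
    · exact hK1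
    · apply LipschitzWith.of_dist_le_mul
      intro x y
      have := Tlip y y.2 x x.2
      have hKc : (K : ℝ) = α⁻¹ * β := rfl
      simpa [hg, Subtype.dist_eq, dist_eq_norm, hKc] using this
  set xstar : s := hgc.fixedPoint g
  have hfix : g xstar = xstar := hgc.fixedPoint_isFixedPt
  -- fixed points of T in s ↔ zeros of F in s
  have fixiff : ∀ x : X, T x = x ↔ F x = 0 := by
    intro x
    constructor
    · intro h
      have : e.symm (F x) = 0 := by
        have := h
        simp only [hT] at this
        have h2 : x - e.symm (F x) = x := this
        have := sub_eq_self.mp h2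
        exact this
      have := congrArg e this
      simpa using this
    · intro h; simp [hT, h]
  refine ⟨(xstar : X), ⟨xstar.2, ?_⟩, ?_⟩
  · exact (fixiff _).mp (congrArg Subtype.val hfix)
  · rintro y ⟨hys, hyF⟩
    have hyfix : g ⟨y, hys⟩ = ⟨y, hys⟩ := by
      apply Subtype.ext
      exact (fixiff y).mpr hyF
    have := hgc.fixedPoint_unique hyfix
    exact congrArg Subtype.val this.symm ▸ rfl
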